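/- Let α in N^d be a vector of positive integers, let n = d+1, let â = (α, 0) in R^n, and define P_n := {(x, ξ_n) in R^{n−1} × R : −2 ≤ x_i ≤ 2 for all i, 1 ≤ ξ_n ≤ 1, 0 ≤ 2 α·x ≤ 1}. If there is no x in {−1,1}^{n−1} with α·x = 0 (i.e., the Partition instance has no solution), then P_n ∩ {−1,1}^n is empty. Moreover, in that case, for any y in P_n and any w in {−1,1}^{n−1} × R, |w − y| ≥ 1/(2|α|) > 0. -/
import Mathlib


/-- The slab polyhedron `P_n` of the Partition reduction, in `ℝⁿ = ℝ^{d+1}`. -/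
def slabPn (d : ℕ) (α : Fin d → ℕ) : Set (EuclideanSpace ℝ (Fin (d + 1))) :=
  {y | (∀ i : Fin d, -2 ≤ y i.castSucc ∧ y i.castSucc ≤ 2) ∧
    (1 ≤ y (Fin.last d) ∧ y (Fin.last d) ≤ 1) ∧
    (0 ≤ 2 * ∑ i, (α i : ℝ) * y i.castSucc ∧
      2 * ∑ i, (α i : ℝ) * y i.castSucc ≤ 1)}

/-- If the Partition instance `α` has no `±1` solution, then `P_n ∩ {-1,1}ⁿ = ∅`;
moreover every `y ∈ P_n` and every `w` whose first `n-1` coordinates are `±1`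
satisfy `|w - y| ≥ 1/(2|α|) > 0`. -/
theorem slabPn_avoids_cube_vertices (d : ℕ) (α : Fin d → ℕ) (hα : ∀ i, 0 < α i)
    (hno : ¬∃ x : Fin d → ℤ, (∀ i, x i = 1 ∨ x i = -1) ∧ ∑ i, (α i : ℤ) * x i = 0) :
    (slabPn d α ∩ {y | ∀ j : Fin (d + 1), y j = 1 ∨ y j = -1} = ∅) ∧
      (0 < 1 / (2 * Real.sqrt (∑ i, ((α i : ℝ)) ^ 2)) ∧
        ∀ y ∈ slabPn d α, ∀ w : EuclideanSpace ℝ (Fin (d + 1)),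
          (∀ i : Fin d, w i.castSucc = 1 ∨ w i.castSucc = -1) →
          1 / (2 * Real.sqrt (∑ i, ((α i : ℝ)) ^ 2)) ≤ dist w y) := by
  rcases Nat.eq_zero_or_pos d with rfl | hd
  · exact absurd ⟨fun _ => 1, fun i => i.elim0, by simp⟩ hno
  set A := Real.sqrt (∑ i, ((α i : ℝ)) ^ 2) with hAdef
  have hApos : 0 < A := by
    apply Real.sqrt_pos.2
    apply Finset.sum_pos
    · intro i _
      have := hα i
      positivity
    · exact ⟨⟨0, hd⟩, Finset.mem_univ _⟩
  have hbound : ∀ y ∈ slabPn d α, ∀ w : EuclideanSpace ℝ (Fin (d + 1)),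
      (∀ i : Fin d, w i.castSucc = 1 ∨ w i.castSucc = -1) →
      1 / (2 * A) ≤ dist w y := by
    intro y hy w hw
    obtain ⟨-, -, hs0, hs1⟩ := hy
    set s : ℝ := ∑ i, (α i : ℝ) * y i.castSucc with hsdef
    have hsabs : |s| ≤ 1 / 2 := by
      rw [abs_le]; constructor <;> linarith
    -- integer vector
    set x : Fin d → ℤ := fun i => if w i.castSucc = 1 then 1 else -1 with hxdef
    have hx1 : ∀ i, x i = 1 ∨ x i = -1 := by
      intro i; by_cases h : w i.castSucc = 1 <;> simp [hxdef, h]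
    have hxw : ∀ i, ((x i : ℤ) : ℝ) = w i.castSucc := by
      intro i
      rcases hw i with h | h
      · simp [hxdef, h]
      · have hne : w i.castSucc ≠ 1 := by rw [h]; norm_num
        simp only [hxdef, if_neg hne, h]
        norm_num
    have hne : (∑ i, (α i : ℤ) * x i) ≠ 0 := fun h => hno ⟨x, hx1, h⟩
    set t : ℝ := ∑ i, (α i : ℝ) * w i.castSucc with htdef
    have ht : t = ((∑ i, (α i : ℤ) * x i : ℤ) : ℝ) := by
      push_cast
      exact Finset.sum_congr rfl fun i _ => by rw [hxw]
    have htabs : 1 ≤ |t| := by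
      rw [ht]
      exact_mod_cast Int.one_le_abs hne
    have hts : 1 / 2 ≤ |t - s| := by
      have := abs_sub_abs_le_abs_sub t s
      linarith [abs_le.1 hsabs]
    -- Cauchy-Schwarz
    have hCS : |t - s| ≤ A * dist w y := by
      have h1 : t - s = ∑ i, (α i : ℝ) * (w i.castSucc - y i.castSucc) := by
        rw [htdef, hsdef, ← Finset.sum_sub_distrib]
        exact Finset.sum_congr rfl fun i _ => by ring
      have h2 : |t - s| ≤ ∑ i, (α i : ℝ) * |w i.castSucc - y i.castSucc| := by
        rw [h1]
        refine (Finset.abs_sum_le_sum_abs _ _).trans ?_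
        apply Finset.sum_le_sum
        intro i _
        rw [abs_mul, abs_of_nonneg (by positivity : (0:ℝ) ≤ (α i : ℝ))]
      have h3 : ∑ i : Fin d, (α i : ℝ) * |w i.castSucc - y i.castSucc| ≤
          A * Real.sqrt (∑ i : Fin d, |w i.castSucc - y i.castSucc| ^ 2) := by
        exact Real.sum_mul_le_sqrt_mul_sqrt Finset.univ (fun i => (α i : ℝ)) (fun i => |w i.castSucc - y i.castSucc|)
      have h4 : Real.sqrt (∑ i : Fin d, |w i.castSucc - y i.castSucc| ^ 2) ≤ dist w y := by
        rw [EuclideanSpace.dist_eq]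
        apply Real.sqrt_le_sqrt
        rw [Fin.sum_univ_castSucc]
        have : ∀ i : Fin d, |w i.castSucc - y i.castSucc| ^ 2 =
            dist (w i.castSucc) (y i.castSucc) ^ 2 := by
          intro i; rw [Real.dist_eq]
        rw [Finset.sum_congr rfl fun i _ => this i]
        exact le_add_of_nonneg_right (by positivity)
      calc |t - s| ≤ ∑ i : Fin d, (α i : ℝ) * |w i.castSucc - y i.castSucc| := h2
        _ ≤ A * Real.sqrt (∑ i : Fin d, |w i.castSucc - y i.castSucc| ^ 2) := h3
        _ ≤ A * dist w y := by
            apply mul_le_mul_of_nonneg_left h4 (le_of_lt hApos)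
    rw [div_le_iff₀ (by positivity)]
    nlinarith
  refine ⟨?_, by positivity, hbound⟩
  ext y
  simp only [Set.mem_inter_iff, Set.mem_setOf_eq, Set.mem_empty_iff_false, iff_false]
  rintro ⟨hy, hv⟩
  have := hbound y hy y (fun i => hv i.castSucc)
  rw [dist_self] at this
  have : (0:ℝ) < 1 / (2 * A) := by positivity
  linarith [hbound y hy y (fun i => hv i.castSucc), dist_self y]
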